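/- Let E be a real inner product space, let p_i, p_j ∈ E with d = ‖p_i − p_j‖, and let Δ be a real number with 0 < Δ < d. Define the shifted point p̃_j = p_j + ((2Δ − d)/d) · (p_i − p_j). Then every q ∈ E with ‖q − p_i‖ ≤ ‖q − p̃_j‖ satisfies ‖q − p_j‖ ≥ Δ. -/

import Mathlib

/-- with `d = ‖p_i − p_j‖`, `0 < Δ < d` and the shifted point
`p̃_j = p_j + ((2Δ − d)/d) • (p_i − p_j)`, every point `q` of the bisector
half-space `{q : ‖q − p_i‖ ≤ ‖q − p̃_j‖}` satisfies `‖q − p_j‖ ≥ Δ`. -/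
theorem bisector_halfspace_clearance
    {E : Type*} [NormedAddCommGroup E] [InnerProductSpace ℝ E]
    (pi pj : E) (Δ : ℝ) (hΔ : 0 < Δ) (hΔlt : Δ < ‖pi - pj‖)
    (ptilde : E) (hptilde : ptilde = pj + ((2 * Δ - ‖pi - pj‖) / ‖pi - pj‖) • (pi - pj)) :
    ∀ q : E, ‖q - pi‖ ≤ ‖q - ptilde‖ → Δ ≤ ‖q - pj‖ := by
  intro q hq
  set d : ℝ := ‖pi - pj‖ with hd
  have hdpos : 0 < d := lt_trans hΔ hΔlt
  set c : ℝ := (2 * Δ - d) / d with hc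
  have hcd : c * d = 2 * Δ - d := div_mul_cancel₀ _ (ne_of_gt hdpos)
  have h1 : q - pi = (q - pj) - (pi - pj) := by abel
  have h2 : q - ptilde = (q - pj) - c • (pi - pj) := by rw [hptilde]; abel
  have hsq : ‖q - pi‖ ^ 2 ≤ ‖q - ptilde‖ ^ 2 :=
    pow_le_pow_left₀ (norm_nonneg _) hq 2
  have e1 : ‖q - pi‖ ^ 2 = ‖q - pj‖ ^ 2 - 2 * inner ℝ (q - pj) (pi - pj) + d ^ 2 := by
    rw [h1, @norm_sub_sq_real]
  have e2 : ‖q - ptilde‖ ^ 2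
      = ‖q - pj‖ ^ 2 - 2 * (c * inner ℝ (q - pj) (pi - pj)) + c ^ 2 * d ^ 2 := by
    rw [h2, @norm_sub_sq_real, real_inner_smul_right, norm_smul, Real.norm_eq_abs,
      mul_pow, sq_abs]
  have hclt : c < 1 := by
    rw [hc, div_lt_one hdpos]; linarith
  have key : Δ * d ≤ inner ℝ (q - pj) (pi - pj) := by
    rw [e1, e2] at hsq
    nlinarith [hsq, hcd, hdpos]
  have hcs : (inner ℝ (q - pj) (pi - pj) : ℝ) ≤ ‖q - pj‖ * d :=
    real_inner_le_norm _ _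
  have := le_trans key hcs
  exact le_of_mul_le_mul_right (by linarith) hdpos
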